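/- Let 0 < m < M and let n be a natural number. For every stepsize schedule α_0, …, α_{n-1} ∈ ℝ, there exist a dimension d, a real symmetric d×d matrix H with mI ⪯ H ⪯ MI, and x_0 ≠ 0 such that the gradient descent iterates for f(x) = (1/2)xᵀHx, namely x_{t+1} = (I − α_t H)x_t, satisfy ‖x_n‖ ≥ ‖x_0‖ / T_n((M+m)/(M−m)). That is, no stepsize schedule achieves a worst-case rate over m-strongly convex M-smooth quadratics better than the Chebyshev rate 1/T_n((M+m)/(M−m)). -/

import Mathlib

open Polynomial Real Set


open Polynomial Real

private lemma natDegree_T_le : ∀ k : ℕ, (Polynomial.Chebyshev.T ℝ (k : ℤ)).natDegree ≤ k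
  | 0 => by simp [Polynomial.Chebyshev.T_zero]
  | 1 => by simp [Polynomial.Chebyshev.T_one]
  | (k+2) => by
    have h1 := natDegree_T_le k
    have h2 := natDegree_T_le (k+1)
    have : ((k+2 : ℕ) : ℤ) = (k : ℤ) + 2 := by push_cast; ring
    rw [this, Polynomial.Chebyshev.T_add_two]
    refine le_trans (natDegree_sub_le _ _) (max_le ?_ (by omega))
    refine le_trans (natDegree_mul_le) ?_
    have : (2 * X : ℝ[X]).natDegree ≤ 1 := le_trans natDegree_mul_le (by simp)
    have h2' : (Polynomial.Chebyshev.T ℝ ((k:ℤ)+1)).natDegree ≤ k + 1 := by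
      have : ((k+1 : ℕ) : ℤ) = (k : ℤ) + 1 := by push_cast; ring
      rw [← this]; exact h2
    omega

private lemma T_eval_ge_one {x : ℝ} (hx : 1 ≤ x) :
    ∀ k : ℕ, 1 ≤ (Polynomial.Chebyshev.T ℝ (k : ℤ)).eval x ∧
      (Polynomial.Chebyshev.T ℝ (k : ℤ)).eval x ≤ (Polynomial.Chebyshev.T ℝ ((k+1 : ℕ) : ℤ)).eval x := by
  intro k
  induction k with
  | zero => simp [Polynomial.Chebyshev.T_zero, Polynomial.Chebyshev.T_one]; linarith
  | succ k ih =>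
    obtain ⟨h1, h2⟩ := ih
    have hc : ((k+2 : ℕ) : ℤ) = (k : ℤ) + 2 := by push_cast; ring
    have hc1 : ((k+1 : ℕ) : ℤ) = (k : ℤ) + 1 := by push_cast; ring
    constructor
    · linarith
    · rw [hc, Polynomial.Chebyshev.T_add_two]
      simp only [eval_sub, eval_mul, eval_ofNat, eval_X]
      rw [hc1] at h2 ⊢
      set a := (Polynomial.Chebyshev.T ℝ ((k:ℤ)+1)).eval x
      set b := (Polynomial.Chebyshev.T ℝ (k:ℤ)).eval x
      have ha : 1 ≤ a := by linarith
      nlinarith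

/-- Key equioscillation lemma. -/
private lemma exists_eval_ge (m M : ℝ) (hm : 0 < m) (hmM : m < M) (n : ℕ)
    (P : ℝ[X]) (hdeg : P.natDegree ≤ n) (hP0 : P.eval 0 = 1) :
    ∃ lam ∈ Set.Icc m M,
      1 ≤ (Polynomial.Chebyshev.T ℝ (n : ℤ)).eval ((M + m) / (M - m)) * |P.eval lam| := by
  by_contra hcon
  push_neg at hcon
  have hMm : (0:ℝ) < M - m := by linarith
  set ρ : ℝ := (M + m) / (M - m) with hρdef
  have hρ1 : 1 ≤ ρ := by rw [le_div_iff₀ hMm]; linarith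
  set T0 : ℝ := (Polynomial.Chebyshev.T ℝ (n : ℤ)).eval ρ with hT0def
  have hT01 : 1 ≤ T0 := (T_eval_ge_one hρ1 n).1
  have hT0pos : 0 < T0 := lt_of_lt_of_le zero_lt_one hT01
  set Q : ℝ[X] := (Polynomial.Chebyshev.T ℝ (n : ℤ)).comp (C ρ - C (2/(M-m)) * X) with hQdef
  set R : ℝ[X] := C T0 * P - Q with hRdef
  -- eval of Q
  have hQeval : ∀ y : ℝ, Q.eval y = (Polynomial.Chebyshev.T ℝ (n : ℤ)).eval (ρ - 2/(M-m) * y) := by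
    intro y; simp [hQdef]
  -- the oscillation points
  set lam : ℕ → ℝ := fun k => ((M + m) - (M - m) * Real.cos (k * π / n)) / 2 with hlamdef
  have hlam_arg : ∀ k : ℕ, ρ - 2/(M-m) * lam k = Real.cos (k * π / n) := by
    intro k
    simp only [hlamdef, hρdef]
    field_simp
    ring
  have hlam_mem : ∀ k : ℕ, lam k ∈ Set.Icc m M := by
    intro k
    have h1 := Real.neg_one_le_cos (k * π / n)
    have h2 := Real.cos_le_one (k * π / n)
    constructor <;> simp only [hlamdef] <;> nlinarith
  have hne : ∀ k : ℕ, k ≤ n → 0 < k → (n:ℝ) ≠ 0 := by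
    intro k hk hk0; exact Nat.cast_ne_zero.mpr (by omega)
  -- Q at lam k is (-1)^k
  have hQlam : ∀ k : ℕ, k ≤ n → Q.eval (lam k) = (-1 : ℝ)^k := by
    intro k hk
    rw [hQeval, hlam_arg, Polynomial.Chebyshev.T_real_cos]
    rcases Nat.eq_zero_or_pos k with rfl | hk0
    · simp
    · have hn : (n:ℝ) ≠ 0 := hne k hk hk0
      rw [show ((n:ℤ):ℝ) * ((k:ℝ) * π / n) = (k:ℝ) * π by push_cast; field_simp]
      have := Real.cos_nat_mul_pi_sub 0 k
      simpa using this
  -- Q at 0 is T0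
  have hQ0 : Q.eval 0 = T0 := by rw [hQeval]; simp [hT0def]
  -- lam is strictly monotone on [0,n]
  have hlam_mono : ∀ j k : ℕ, j < k → k ≤ n → lam j < lam k := by
    intro j k hjk hk
    have hn : (n:ℝ) ≠ 0 := hne k hk (Nat.pos_of_ne_zero (by omega))
    have hnpos : (0:ℝ) < n := lt_of_le_of_ne (Nat.cast_nonneg n) (Ne.symm hn)
    have hθj : (j:ℝ) * π / n ∈ Set.Icc 0 π := by
      constructor
      · positivity
      · rw [div_le_iff₀ hnpos]
        have : (j:ℝ) ≤ n := by exact_mod_cast le_of_lt (lt_of_lt_of_le hjk hk)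
        nlinarith [Real.pi_pos]
    have hθk : (k:ℝ) * π / n ∈ Set.Icc 0 π := by
      constructor
      · positivity
      · rw [div_le_iff₀ hnpos]
        have : (k:ℝ) ≤ n := by exact_mod_cast hk
        nlinarith [Real.pi_pos]
    have hθ : (j:ℝ) * π / n < (k:ℝ) * π / n := by
      have hjk' : (j:ℝ) < k := by exact_mod_cast hjk
      gcongr
    have := Real.strictAntiOn_cos hθj hθk hθ
    simp only [hlamdef]
    nlinarith
  -- R vanishes at 0
  have hR0 : R.eval 0 = 0 := by
    simp [hRdef, hP0, hQ0]
  -- degree of R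
  have hRdeg : R.natDegree ≤ n := by
    refine le_trans (natDegree_sub_le _ _) (max_le ?_ ?_)
    · exact le_trans natDegree_mul_le (by simpa using hdeg)
    · refine le_trans natDegree_comp_le ?_
      have h1 : (Polynomial.Chebyshev.T ℝ (n : ℤ)).natDegree ≤ n := natDegree_T_le n
      have h2 : (C ρ - C (2/(M-m)) * X : ℝ[X]).natDegree ≤ 1 := by
        refine le_trans (natDegree_sub_le _ _) (max_le (by simp) ?_)
        exact le_trans natDegree_mul_le (by simp)
      calc (Polynomial.Chebyshev.T ℝ (n : ℤ)).natDegree * (C ρ - C (2/(M-m)) * X : ℝ[X]).natDegree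
          ≤ n * 1 := Nat.mul_le_mul h1 h2
        _ = n := by ring
  -- sign alternation of R at points lam k
  have habs : ∀ k : ℕ, k ≤ n → |T0 * P.eval (lam k)| < 1 := by
    intro k hk
    have := hcon (lam k) (hlam_mem k)
    rw [abs_mul, abs_of_pos hT0pos]
    exact this
  -- roots via IVT
  have hcont : ∀ a b : ℝ, ContinuousOn (fun y => R.eval y) (Set.Icc a b) :=
    fun a b => (Polynomial.continuous R).continuousOn
  have hroot : ∀ k : ℕ, k < n → ∃ μ ∈ Set.Ioo (lam k) (lam (k+1)), R.eval μ = 0 := by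
    intro k hk
    have h1 := habs k (le_of_lt hk)
    have h2 := habs (k+1) hk
    have hQk := hQlam k (le_of_lt hk)
    have hQk1 := hQlam (k+1) hk
    have hRk : R.eval (lam k) = T0 * P.eval (lam k) - (-1:ℝ)^k := by
      simp [hRdef, hQk]
    have hRk1 : R.eval (lam (k+1)) = T0 * P.eval (lam (k+1)) - (-1:ℝ)^(k+1) := by
      simp [hRdef, hQk1]
    have hle : lam k ≤ lam (k+1) := le_of_lt (hlam_mono k (k+1) (by omega) hk)
    rcases Nat.even_or_odd k with he | ho
    · -- R(lam k) < 0 < R(lam (k+1))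
      have e1 : (-1:ℝ)^k = 1 := he.neg_one_pow
      have e2 : (-1:ℝ)^(k+1) = -1 := by rw [pow_succ, e1]; ring
      have s1 : R.eval (lam k) < 0 := by
        rw [hRk, e1]; have := abs_lt.mp h1; linarith [this.2]
      have s2 : 0 < R.eval (lam (k+1)) := by
        rw [hRk1, e2]; have := abs_lt.mp h2; linarith [this.1]
      have := intermediate_value_Ioo hle (hcont _ _)
      have hmem : (0:ℝ) ∈ Set.Ioo (R.eval (lam k)) (R.eval (lam (k+1))) := ⟨s1, s2⟩
      obtain ⟨μ, hμ1, hμ2⟩ := this hmem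
      exact ⟨μ, hμ1, hμ2⟩
    · have e1 : (-1:ℝ)^k = -1 := ho.neg_one_pow
      have e2 : (-1:ℝ)^(k+1) = 1 := by rw [pow_succ, e1]; ring
      have s1 : 0 < R.eval (lam k) := by
        rw [hRk, e1]; have := abs_lt.mp h1; linarith [this.1]
      have s2 : R.eval (lam (k+1)) < 0 := by
        rw [hRk1, e2]; have := abs_lt.mp h2; linarith [this.2]
      have := intermediate_value_Ioo' hle (hcont _ _)
      have hmem : (0:ℝ) ∈ Set.Ioo (R.eval (lam (k+1))) (R.eval (lam k)) := ⟨s2, s1⟩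
      obtain ⟨μ, hμ1, hμ2⟩ := this hmem
      exact ⟨μ, hμ1, hμ2⟩
  choose μ hμmem hμroot using hroot
  -- lam k < μ k < lam (k+1), hence μ strictly monotone and positive
  have hμlt : ∀ a b (ha : a < n) (hb : b < n), a < b → μ a ha < μ b hb := by
    intro a b ha hb hab
    have h1 : μ a ha < lam (a+1) := (hμmem a ha).2
    have h2 : lam b < μ b hb := (hμmem b hb).1
    have h3 : lam (a+1) ≤ lam b := by
      rcases Nat.lt_or_ge (a+1) b with hl | hg
      · exact le_of_lt (hlam_mono (a+1) b hl (le_of_lt hb))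
      · have : a + 1 = b := by omega
        rw [this]
    linarith
  have hμpos : ∀ a (ha : a < n), 0 < μ a ha := by
    intro a ha
    have := (hμmem a ha).1
    have := (hlam_mem a).1
    linarith
  -- build the injection Fin (n+1) → ℝ of roots of R
  set f : Fin (n+1) → ℝ := fun i => if h : (i : ℕ) < n then μ i h else 0 with hfdef
  have hfinj : Function.Injective f := by
    intro i j hij
    simp only [hfdef] at hij
    by_cases hi : (i : ℕ) < n <;> by_cases hj : (j : ℕ) < n <;>
      simp only [hi, hj, dif_pos, dif_neg, dite_true, dite_false] at hij
    · rcases lt_trichotomy (i : ℕ) (j : ℕ) with h | h | h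
      · exact absurd hij (ne_of_lt (hμlt _ _ hi hj h))
      · exact Fin.ext h
      · exact absurd hij.symm (ne_of_lt (hμlt _ _ hj hi h))
    · exact absurd hij (ne_of_gt (hμpos _ hi))
    · exact absurd hij.symm (ne_of_gt (hμpos _ hj))
    · have : (i : ℕ) = (j : ℕ) := by omega
      exact Fin.ext this
  have hfeval : ∀ i, R.eval (f i) = 0 := by
    intro i
    simp only [hfdef]
    by_cases hi : (i : ℕ) < n
    · rw [dif_pos hi]; exact hμroot _ hi
    · rw [dif_neg hi]; exact hR0
  have hRzero : R = 0 := by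
    refine Polynomial.eq_zero_of_natDegree_lt_card_of_eval_eq_zero R hfinj hfeval ?_
    simpa using Nat.lt_succ_of_le hRdeg
  -- contradiction at lam 0
  have h0 := habs 0 (Nat.zero_le n)
  have hQ0' := hQlam 0 (Nat.zero_le n)
  have : R.eval (lam 0) = 0 := by rw [hRzero]; simp
  have : T0 * P.eval (lam 0) = 1 := by
    simp only [hRdef, eval_sub, eval_mul, eval_C, hQ0'] at this
    simp only [pow_zero] at this
    linarith
  rw [this] at h0
  simp at h0

/-- **Chebyshev lower bound:** no stepsize schedule beats the Chebyshev rate on the class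
of `m`-strongly convex, `M`-smooth quadratics. For every schedule `α₀, …, α_{n-1}` there
are a dimension `d`, a symmetric matrix `H` with `mI ⪯ H ⪯ MI`, and an initial point
`x₀ ≠ 0` such that the gradient descent iterates `x_{t+1} = (I − α_t H)x_t` for
`f(x) = ½xᵀHx` satisfy `‖xₙ‖ ≥ ‖x₀‖ / Tₙ((M+m)/(M−m))`. -/
theorem chebyshev_rate_optimal_quadratics (m M : ℝ) (hm : 0 < m) (hmM : m < M)
    (n : ℕ) (α : ℕ → ℝ) :
    ∃ (d : ℕ) (H : Matrix (Fin d) (Fin d) ℝ),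
      H.IsSymm ∧
      (H - m • (1 : Matrix (Fin d) (Fin d) ℝ)).PosSemidef ∧
      (M • (1 : Matrix (Fin d) (Fin d) ℝ) - H).PosSemidef ∧
      ∃ x₀ : EuclideanSpace ℝ (Fin d), x₀ ≠ 0 ∧
        ∀ x : ℕ → EuclideanSpace ℝ (Fin d), x 0 = x₀ →
          (∀ t, x (t + 1) = x t - α t • Matrix.toEuclideanLin H (x t)) →
          ‖x n‖ ≥ ‖x 0‖ / (Polynomial.Chebyshev.T ℝ (n : ℤ)).eval ((M + m) / (M - m)) := by
  classical
  set P : ℝ[X] := ∏ t ∈ Finset.range n, (1 - C (α t) * X) with hPdef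
  have hPdeg : P.natDegree ≤ n := by
    refine le_trans (Polynomial.natDegree_prod_le _ _) ?_
    calc ∑ t ∈ Finset.range n, (1 - C (α t) * X : ℝ[X]).natDegree
        ≤ ∑ t ∈ Finset.range n, 1 := by
          refine Finset.sum_le_sum fun t _ => ?_
          refine le_trans (natDegree_sub_le _ _) (max_le (by simp) ?_)
          exact le_trans natDegree_mul_le (by simp)
      _ = n := by simp
  have hP0 : P.eval 0 = 1 := by simp [hPdef, Polynomial.eval_prod]
  obtain ⟨lam, hlam, hkey⟩ := exists_eval_ge m M hm hmM n P hPdeg hP0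
  set T0 : ℝ := (Polynomial.Chebyshev.T ℝ (n : ℤ)).eval ((M + m) / (M - m)) with hT0def
  have hMm : (0:ℝ) < M - m := by linarith
  have hρ1 : (1:ℝ) ≤ (M + m) / (M - m) := by rw [le_div_iff₀ hMm]; linarith
  have hT01 : 1 ≤ T0 := (T_eval_ge_one hρ1 n).1
  have hT0pos : 0 < T0 := lt_of_lt_of_le zero_lt_one hT01
  refine ⟨1, Matrix.diagonal (fun _ => lam), ?_, ?_, ?_, ?_⟩
  · exact (Matrix.isSymm_diagonal _)
  · rw [show (m • (1 : Matrix (Fin 1) (Fin 1) ℝ)) = Matrix.diagonal (fun _ => m) by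
      ext i j; by_cases h : i = j <;> simp [h, Matrix.one_apply, Matrix.diagonal_apply],
      Matrix.diagonal_sub]
    exact Matrix.PosSemidef.diagonal fun i => by simpa using sub_nonneg.mpr hlam.1
  · rw [show (M • (1 : Matrix (Fin 1) (Fin 1) ℝ)) = Matrix.diagonal (fun _ => M) by
      ext i j; by_cases h : i = j <;> simp [h, Matrix.one_apply, Matrix.diagonal_apply],
      Matrix.diagonal_sub]
    exact Matrix.PosSemidef.diagonal fun i => by simpa using sub_nonneg.mpr hlam.2
  · refine ⟨EuclideanSpace.single 0 (1:ℝ), ?_, ?_⟩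
    · intro h
      have := congrArg (fun v => ‖v‖) h
      simp [EuclideanSpace.norm_single] at this
    · intro x hx0 hrec
      have hlin : ∀ v : EuclideanSpace ℝ (Fin 1),
          Matrix.toEuclideanLin (Matrix.diagonal (fun _ => lam)) v = lam • v := by
        intro v
        apply (WithLp.equiv 2 (Fin 1 → ℝ)).injective
        simp only [WithLp.equiv_apply, Matrix.ofLp_toEuclideanLin_apply]
        funext i
        simp [Matrix.mulVec_diagonal]
      have hiter : ∀ t, x t = (∏ s ∈ Finset.range t, (1 - α s * lam)) • x 0 := by
        intro t
        induction t with
        | zero => simp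
        | succ t ih =>
          rw [hrec t, ih, hlin, Finset.prod_range_succ]
          rw [smul_smul, smul_smul, ← sub_smul]
          congr 1
          ring
      have hPev : P.eval lam = ∏ s ∈ Finset.range n, (1 - α s * lam) := by
        rw [hPdef, Polynomial.eval_prod]
        exact Finset.prod_congr rfl fun t _ => by simp
      have hxnorm : ‖x n‖ = |P.eval lam| * ‖x 0‖ := by
        rw [hiter n, norm_smul, Real.norm_eq_abs, hPev]
      rw [ge_iff_le, hxnorm, div_le_iff₀ hT0pos]
      have hn0 : (0:ℝ) ≤ ‖x 0‖ := norm_nonneg _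
      nlinarith [abs_nonneg (P.eval lam)]
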